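/- If a topological space X has a ⟨cf(w(X)), cf(w(X))⟩-splitter, then the Noetherian type of X is at most the weight of X. More generally, for any infinite cardinal κ, a space with a ⟨cf(κ), cf(κ)⟩-splitter also has a ⟨κ, κ⟩-splitter. -/

import Mathlib

open Cardinal Set

universe u

variable {X : Type u}

/-- `B` is a base for the topology of `X`. -/
def IsBase [TopologicalSpace X] (B : Set (Set X)) : Prop :=
  (∀ U ∈ B, IsOpen U) ∧ ∀ W : Set X, IsOpen W → ∀ p ∈ W, ∃ U ∈ B, p ∈ U ∧ U ⊆ W

/-- `B` is a local base at `p`. -/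
def IsLocalBase [TopologicalSpace X] (p : X) (B : Set (Set X)) : Prop :=
  (∀ U ∈ B, IsOpen U ∧ p ∈ U) ∧ ∀ W : Set X, IsOpen W → p ∈ W → ∃ U ∈ B, U ⊆ W

/-- `B` is a local π-base at `p`. -/
def IsLocalPiBase [TopologicalSpace X] (p : X) (B : Set (Set X)) : Prop :=
  (∀ U ∈ B, IsOpen U ∧ U.Nonempty) ∧ ∀ W : Set X, IsOpen W → p ∈ W → ∃ U ∈ B, U ⊆ W

/-- The weight of `X`: the least infinite cardinal `κ` such that `X` has a base of
cardinality at most `κ`. -/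
noncomputable def weight (X : Type u) [TopologicalSpace X] : Cardinal.{u} :=
  sInf {κ | ℵ₀ ≤ κ ∧ ∃ B : Set (Set X), IsBase B ∧ #B ≤ κ}

/-- The character of `p` in `X`. -/
noncomputable def character [TopologicalSpace X] (p : X) : Cardinal.{u} :=
  sInf {κ | ℵ₀ ≤ κ ∧ ∃ B : Set (Set X), IsLocalBase p B ∧ #B ≤ κ}

/-- The π-character of `p` in `X`. -/
noncomputable def piCharacter [TopologicalSpace X] (p : X) : Cardinal.{u} :=
  sInf {κ | ℵ₀ ≤ κ ∧ ∃ B : Set (Set X), IsLocalPiBase p B ∧ #B ≤ κ}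

/-- A family of sets (ordered by `⊆`) is `κ^op`-like if no member is contained in
`κ`-many members. -/
def IsOpLike {Y : Type u} (B : Set (Set Y)) (κ : Cardinal.{u}) : Prop :=
  ∀ U ∈ B, #{V : Set Y // V ∈ B ∧ U ⊆ V} < κ

/-- The Noetherian type of `X`: the least infinite `κ` such that `X` has a
`κ^op`-like base. -/
noncomputable def Nt (X : Type u) [TopologicalSpace X] : Cardinal.{u} :=
  sInf {κ | ℵ₀ ≤ κ ∧ ∃ B : Set (Set X), IsBase B ∧ IsOpLike B κ}

/-- `⟨F i⟩` is a `⟨#ι, κ⟩`-splitter of `X`: a sequence of finite open covers such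
that for every index set `I` of cardinality `κ` and every choice `U i ∈ F i`
(`i ∈ I`), the interior of `⋂_{i ∈ I} U i` is empty. -/
def IsSplitter [TopologicalSpace X] {ι : Type u} (F : ι → Set (Set X))
    (κ : Cardinal.{u}) : Prop :=
  (∀ i, (F i).Finite ∧ (∀ U ∈ F i, IsOpen U) ∧ ⋃₀ F i = Set.univ) ∧
  ∀ (I : Set ι) (U : ι → Set X), #I = κ → (∀ i ∈ I, U i ∈ F i) →
    interior (⋂ i ∈ I, U i) = ∅

lemma weight_mem [TopologicalSpace X] :
    ℵ₀ ≤ weight X ∧ ∃ B : Set (Set X), IsBase B ∧ #B ≤ weight X := by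
  have h : {κ : Cardinal.{u} | ℵ₀ ≤ κ ∧ ∃ B : Set (Set X), IsBase B ∧ #B ≤ κ}.Nonempty :=
    ⟨max ℵ₀ (#(Set X)), le_max_left _ _, {U : Set X | IsOpen U},
      ⟨fun U hU => hU, fun W hW p hp => ⟨W, hW, hp, subset_rfl⟩⟩,
      (mk_set_le _).trans (le_max_right _ _)⟩
  exact csInf_mem h


open Ordinal in
lemma aux2 [TopologicalSpace X] (κ : Cardinal.{u}) (hκ : ℵ₀ ≤ κ)
    (h : ∃ (ι : Type u) (F : ι → Set (Set X)), #ι = κ.ord.cof ∧ IsSplitter F κ.ord.cof) :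
    ∃ (ι : Type u) (F : ι → Set (Set X)), #ι = κ ∧ IsSplitter F κ := by
  obtain ⟨ι, F, hι, hF⟩ := h
  haveI : IsWellOrder κ.ord.ToType (· < ·) := isWellOrder_lt
  obtain ⟨S, hS, hScard⟩ := Order.cof_eq (α := κ.ord.ToType)
  rw [Ordinal.cof_toType] at hScard
  have e : ↥S ≃ ι := Classical.choice (Cardinal.eq.mp (hScard.trans hι.symm))
  have hg : ∀ x : κ.ord.ToType, ∃ s ∈ S, x ≤ s := by
    intro x
    obtain ⟨s, hs, hxs⟩ := hS x
    exact ⟨s, hs, hxs⟩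
  choose g hgS hgle using hg
  set h : κ.ord.ToType → ι := fun x => e ⟨g x, hgS x⟩ with hhdef
  have hfiber : ∀ i : ι, #(h ⁻¹' {i}) < κ := by
    intro i
    have hsub : h ⁻¹' {i} ⊆ Set.Iic ((e.symm i : ↥S) : κ.ord.ToType) := by
      intro x hx
      have : (⟨g x, hgS x⟩ : ↥S) = e.symm i := by
        rw [← Equiv.apply_eq_iff_eq_symm_apply]; exact hx
      have := congrArg Subtype.val this
      simpa [← this] using hgle x
    calc #(h ⁻¹' {i}) ≤ #(Set.Iic ((e.symm i : ↥S) : κ.ord.ToType)) :=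
          mk_le_mk_of_subset hsub
      _ ≤ #(Set.Iio ((e.symm i : ↥S) : κ.ord.ToType)) + 1 := by
          rw [← Set.Iio_insert]; exact mk_insert_le
      _ < κ := add_lt_of_lt hκ (mk_Iio_ord_toType _) (lt_of_lt_of_le one_lt_aleph0 hκ)
  refine ⟨κ.ord.ToType, F ∘ h, mk_ord_toType κ, fun x => hF.1 (h x), ?_⟩
  intro I U' hI hU'
  have hJge : κ.ord.cof ≤ #(h '' I) := by
    by_contra hJ
    push_neg at hJ
    have hIsub : I ⊆ ⋃ j : ↥(h '' I), h ⁻¹' {(j : ι)} := by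
      intro x hx
      exact Set.mem_iUnion.mpr ⟨⟨h x, Set.mem_image_of_mem h hx⟩, rfl⟩
    have h1 : #I ≤ Cardinal.sum fun j : ↥(h '' I) => #(h ⁻¹' {(j : ι)}) :=
      (mk_le_mk_of_subset hIsub).trans mk_iUnion_le_sum_mk
    have h2 : (Cardinal.sum fun j : ↥(h '' I) => #(h ⁻¹' {(j : ι)})) ≤
        #(h '' I) * ⨆ j : ↥(h '' I), #(h ⁻¹' {(j : ι)}) := sum_le_mk_mul_iSup _
    have h3 : (⨆ j : ↥(h '' I), #(h ⁻¹' {(j : ι)})) < κ :=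
      Ordinal.iSup_lt hJ fun j => hfiber _
    have h4 : #(h '' I) < κ := hJ.trans_le (cof_ord_le κ)
    have : #I < κ := h1.trans_lt ((h2.trans_lt (mul_lt_of_lt hκ h4 h3)))
    exact this.ne hI
  obtain ⟨J, hJsub, hJcard⟩ := Cardinal.le_mk_iff_exists_subset.mp hJge
  have sel : ∀ i ∈ J, ∃ x, x ∈ I ∧ h x = i := by
    intro i hi
    obtain ⟨x, hx, hxi⟩ := hJsub hi
    exact ⟨x, hx, hxi⟩
  haveI : Nonempty κ.ord.ToType :=
    Ordinal.toType_nonempty_iff_ne_zero.mpr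
      (by simp only [ne_eq, Cardinal.ord_eq_zero]; rintro rfl; exact Cardinal.aleph0_pos.not_ge hκ)
  choose! x hxI hxh using sel
  set U : ι → Set X := fun i => U' (x i) with hUdef
  have hUF : ∀ i ∈ J, U i ∈ F i := by
    intro i hi
    have := hU' (x i) (hxI i hi)
    simpa [hUdef, Function.comp, hxh i hi] using this
  have hemp : interior (⋂ i ∈ J, U i) = ∅ := hF.2 J U hJcard hUF
  have hsub : (⋂ x ∈ I, U' x) ⊆ ⋂ i ∈ J, U i := by
    intro y hy
    simp only [Set.mem_iInter] at hy ⊢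
    intro i hi
    exact hy (x i) (hxI i hi)
  have := interior_mono hsub
  rw [hemp] at this
  exact Set.eq_empty_of_subset_empty this

lemma aux1 [TopologicalSpace X]
    (hsp : ∃ (ι : Type u) (F : ι → Set (Set X)), #ι = weight X ∧ IsSplitter F (weight X)) :
    Nt X ≤ weight X := by
  set w := weight X with hwdef
  obtain ⟨hw0, B₀, hB₀, hB₀card⟩ := weight_mem (X := X)
  obtain ⟨ι, F, hι, hF⟩ := hsp
  by_cases hX : Nonempty X
  case neg =>
    refine csInf_le' ⟨hw0, ∅, ⟨fun U hU => absurd hU (Set.notMem_empty U),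
      fun W _ p _ => absurd ⟨p⟩ hX⟩, fun U hU => absurd hU (Set.notMem_empty U)⟩
  have hB₀ne : B₀.Nonempty := by
    obtain ⟨p⟩ := hX
    obtain ⟨U, hU, _, _⟩ := hB₀.2 Set.univ isOpen_univ p (Set.mem_univ p)
    exact ⟨U, hU⟩
  haveI : Nonempty ↥B₀ := hB₀ne.to_subtype
  obtain ⟨f⟩ : Nonempty (↥B₀ ↪ ι) := by
    rw [← Cardinal.le_def, hι]; exact hB₀card
  set e : ι → Set X := fun i => ((Function.invFun f i : ↥B₀) : Set X) with hedef
  have hesurj : ∀ U ∈ B₀, ∃ i, e i = U := by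
    intro U hU
    obtain ⟨i, hi⟩ := Function.invFun_surjective f.injective ⟨U, hU⟩
    exact ⟨i, by rw [hedef]; exact congrArg Subtype.val hi⟩
  have heB₀ : ∀ i, e i ∈ B₀ := fun i => (Function.invFun f i).2
  set B : Set (Set X) := {W | W.Nonempty ∧ ∃ i, ∃ V ∈ F i, W = e i ∩ V} with hBdef
  have hBopen : ∀ W ∈ B, IsOpen W := by
    rintro W ⟨-, i, V, hV, rfl⟩
    exact (hB₀.1 _ (heB₀ i)).inter ((hF.1 i).2.1 V hV)
  have hBbase : IsBase B := by
    refine ⟨hBopen, fun W hW p hp => ?_⟩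
    obtain ⟨U, hU, hpU, hUW⟩ := hB₀.2 W hW p hp
    obtain ⟨i, rfl⟩ := hesurj U hU
    have : p ∈ ⋃₀ F i := by rw [(hF.1 i).2.2]; trivial
    obtain ⟨V, hV, hpV⟩ := this
    exact ⟨e i ∩ V, ⟨⟨p, hpU, hpV⟩, i, V, hV, rfl⟩, ⟨hpU, hpV⟩,
      (Set.inter_subset_left).trans hUW⟩
  refine csInf_le' ⟨hw0, B, hBbase, ?_⟩
  rintro G hG
  obtain ⟨hGne, i₀, V₀, hV₀, hGeq⟩ := hG
  have hGopen : IsOpen G := hBopen G ⟨hGne, i₀, V₀, hV₀, hGeq⟩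
  set T : Set ι := {j | ∃ V ∈ F j, G ⊆ V} with hTdef
  have hT : #T < w := by
    rcases lt_or_eq_of_le ((mk_set_le T).trans_eq hι) with h | h
    · exact h
    have sel : ∀ j ∈ T, ∃ V, V ∈ F j ∧ G ⊆ V := fun j hj => hj
    choose! V hVF hVG using sel
    have hemp := hF.2 T V h hVF
    have : G ⊆ ⋂ j ∈ T, V j := by
      intro y hy
      simp only [Set.mem_iInter]
      exact fun j hj => hVG j hj hy
    have : G ⊆ interior (⋂ j ∈ T, V j) :=
      interior_maximal this hGopen |>.trans subset_rfl
    rw [hemp] at this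
    exact absurd (this hGne.choose_spec) (Set.notMem_empty _)
  -- count supersets
  have key : ∀ v : {V : Set X // V ∈ B ∧ G ⊆ V},
      ∃ p : Σ j : ↥T, ↥(F (j : ι)), (v : Set X) = e (p.1 : ι) ∩ (p.2 : Set X) := by
    rintro ⟨W, ⟨⟨hne, i, V', hV', rfl⟩, hGW⟩⟩
    have hiT : i ∈ T := ⟨V', hV', hGW.trans Set.inter_subset_right⟩
    exact ⟨⟨⟨i, hiT⟩, ⟨V', hV'⟩⟩, rfl⟩
  choose φ hφ using key
  have hinj : Function.Injective φ := by
    intro a b hab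
    apply Subtype.ext
    rw [hφ a, hφ b, hab]
  have hcount : #{V : Set X // V ∈ B ∧ G ⊆ V} ≤ #(Σ j : ↥T, ↥(F (j : ι))) :=
    mk_le_of_injective hinj
  have hfin : ∀ j : ↥T, #(↥(F (j : ι))) ≤ ℵ₀ := fun j => ((hF.1 _).1.lt_aleph0).le
  rcases eq_or_lt_of_le hw0 with hweq | hwlt
  · -- w = ℵ₀ : everything finite
    haveI : Finite ↥T := Cardinal.lt_aleph0_iff_finite.mp (hweq ▸ hT)
    haveI : ∀ j : ↥T, Finite ↥(F (j : ι)) := fun j => (hF.1 _).1.to_subtype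
    refine hcount.trans_lt ?_
    have hfin2 : #(Σ j : ↥T, ↥(F (j : ι))) < ℵ₀ :=
      Cardinal.lt_aleph0_iff_finite.mpr inferInstance
    exact lt_of_lt_of_le hfin2 hweq.le
  · refine hcount.trans_lt ?_
    rw [Cardinal.mk_sigma]
    calc (Cardinal.sum fun j : ↥T => #(↥(F (j : ι))))
        ≤ Cardinal.sum fun _ : ↥T => ℵ₀ := Cardinal.sum_le_sum _ _ hfin
      _ = #T * ℵ₀ := by simp
      _ < w := Cardinal.mul_lt_of_lt hw0 hT hwlt

/-- If `X` has a `⟨cf w(X), cf w(X)⟩`-splitter then `Nt(X) ≤ w(X)`; more generally,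
for any infinite `κ`, a space with a `⟨cf κ, cf κ⟩`-splitter has a `⟨κ,κ⟩`-splitter. -/
theorem splitter_cf_implies [TopologicalSpace X] :
    ((∃ (ι : Type u) (F : ι → Set (Set X)),
        #ι = (weight X).ord.cof ∧ IsSplitter F ((weight X).ord.cof)) →
      Nt X ≤ weight X) ∧
    ∀ κ : Cardinal.{u}, ℵ₀ ≤ κ →
      (∃ (ι : Type u) (F : ι → Set (Set X)), #ι = κ.ord.cof ∧ IsSplitter F κ.ord.cof) →
      ∃ (ι : Type u) (F : ι → Set (Set X)), #ι = κ ∧ IsSplitter F κ := by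
  refine ⟨fun h => ?_, aux2⟩
  obtain ⟨hw0, -⟩ := weight_mem (X := X)
  exact aux1 (aux2 (weight X) hw0 h)
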